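/- Let d ∈ ℕ, let F : ℝ^d × ℝ → ℝ^d be continuously differentiable, and let p : ℝ^d × ℝ → ℝ be continuously differentiable with continuous spatial partial derivatives, p(x,τ) > 0 for all (x,τ), and satisfying the continuity equation ∂_τ p(x,τ) = ∇·(F(x,τ)p(x,τ)) for all (x,τ) ∈ ℝ^d × ℝ. Let x̄ : ℝ → ℝ^d be differentiable with x̄'(τ) = −F(x̄(τ),τ) for all τ. Then for every τ ∈ ℝ, the function τ ↦ log p(x̄(τ),τ) is differentiable and d/dτ [log p(x̄(τ),τ)] = (∇·F)(x̄(τ),τ). -/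

import Mathlib

open RealInnerProductSpace

/-- Spatial partial derivative in the `i`-th coordinate. -/
noncomputable def spd {d : ℕ} (u : EuclideanSpace ℝ (Fin d) → ℝ) (i : Fin d)
    (x : EuclideanSpace ℝ (Fin d)) : ℝ :=
  fderiv ℝ u x (EuclideanSpace.single i 1)

/-- Spatial divergence of a vector field. -/
noncomputable def sdiv {d : ℕ} (F : EuclideanSpace ℝ (Fin d) → EuclideanSpace ℝ (Fin d))
    (x : EuclideanSpace ℝ (Fin d)) : ℝ :=
  ∑ i, fderiv ℝ (fun y => F y i) x (EuclideanSpace.single i 1)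

/-- Spatial Laplacian: sum of second partial derivatives. -/
noncomputable def slap {d : ℕ} (u : EuclideanSpace ℝ (Fin d) → ℝ)
    (x : EuclideanSpace ℝ (Fin d)) : ℝ :=
  ∑ i, spd (spd u i) i x

lemma clm_eq_sum {d : ℕ} (L : EuclideanSpace ℝ (Fin d) →L[ℝ] ℝ)
    (v : EuclideanSpace ℝ (Fin d)) :
    L v = ∑ i, v i * L (EuclideanSpace.single i 1) := by
  conv_lhs => rw [← (EuclideanSpace.basisFun (Fin d) ℝ).sum_repr v]
  rw [map_sum]
  simp [EuclideanSpace.basisFun_apply, EuclideanSpace.basisFun_repr, smul_eq_mul]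

/-- Instantaneous change-of-variables along the reverse-time probability flow:
if `∂_τ p = ∇·(F p)` and `x̄' = −F(x̄, τ)`, then
`d/dτ log p(x̄(τ), τ) = (∇·F)(x̄(τ), τ)`. -/
theorem log_density_along_reverse_flow
    (d : ℕ) (F : EuclideanSpace ℝ (Fin d) × ℝ → EuclideanSpace ℝ (Fin d))
    (p : EuclideanSpace ℝ (Fin d) × ℝ → ℝ)
    (hF : ContDiff ℝ 1 F) (hp : ContDiff ℝ 1 p)
    (hpos : ∀ x τ, 0 < p (x, τ))
    (hcont : ∀ (x : EuclideanSpace ℝ (Fin d)) (τ : ℝ),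
      deriv (fun s => p (x, s)) τ = sdiv (fun y => p (y, τ) • F (y, τ)) x)
    (xb : ℝ → EuclideanSpace ℝ (Fin d))
    (hxb : ∀ τ, HasDerivAt xb (-F (xb τ, τ)) τ) :
    ∀ τ : ℝ, HasDerivAt (fun σ => Real.log (p (xb σ, σ)))
      (sdiv (fun y => F (y, τ)) (xb τ)) τ := by
  intro τ
  set x := xb τ with hx
  have hpd : Differentiable ℝ p := hp.differentiable one_ne_zero
  have hFd : Differentiable ℝ F := hF.differentiable one_ne_zero
  set L := fderiv ℝ p (x, τ) with hL
  -- derivative of the curve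
  have h1 : HasDerivAt (fun σ => ((xb σ, σ) : EuclideanSpace ℝ (Fin d) × ℝ))
      (-F (x, τ), 1) τ := (hxb τ).prodMk (hasDerivAt_id τ)
  have h2 : HasDerivAt (fun σ => p (xb σ, σ)) (L (-F (x, τ), 1)) τ :=
    (hpd (x, τ)).hasFDerivAt.comp_hasDerivAt_of_eq τ h1 rfl
  -- time partial
  have hts : HasDerivAt (fun s => p (x, s)) (L (0, 1)) τ :=
    (hpd (x, τ)).hasFDerivAt.comp_hasDerivAt τ
      ((hasDerivAt_const τ x).prodMk (hasDerivAt_id τ))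
  have hL01 : L (0, 1) = sdiv (fun y => p (y, τ) • F (y, τ)) x := by
    rw [← hcont x τ, hts.deriv]
  -- spatial fderiv of p(·, τ)
  have hinl : ∀ y : EuclideanSpace ℝ (Fin d),
      HasFDerivAt (fun z : EuclideanSpace ℝ (Fin d) => ((z, τ) : EuclideanSpace ℝ (Fin d) × ℝ))
        (ContinuousLinearMap.inl ℝ _ ℝ) y := fun y =>
    (hasFDerivAt_id y).prodMk (hasFDerivAt_const τ y)
  have hsp : ∀ y, HasFDerivAt (fun z => p (z, τ))
      ((fderiv ℝ p (y, τ)).comp (ContinuousLinearMap.inl ℝ _ ℝ)) y := fun y =>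
    (hpd (y, τ)).hasFDerivAt.comp y (hinl y)
  have hspd : DifferentiableAt ℝ (fun z => p (z, τ)) x := (hsp x).differentiableAt
  have hFid : ∀ i : Fin d, DifferentiableAt ℝ (fun z => F (z, τ) i) x := by
    intro i
    exact (EuclideanSpace.proj i).differentiableAt.comp x
      ((hFd (x, τ)).comp x (hinl x).differentiableAt)
  -- expand the divergence of p • F
  have hdiv : sdiv (fun y => p (y, τ) • F (y, τ)) x
      = p (x, τ) * sdiv (fun y => F (y, τ)) x + L (F (x, τ), 0) := by
    have hre : ∀ i : Fin d, (fun y => (p (y, τ) • F (y, τ)) i)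
        = fun y => p (y, τ) * F (y, τ) i := by
      intro i; funext y; simp [smul_eq_mul]
    unfold sdiv
    rw [Finset.mul_sum]
    have hLF : L (F (x, τ), 0)
        = ∑ i, F (x, τ) i * ((fderiv ℝ p (x, τ)).comp (ContinuousLinearMap.inl ℝ _ ℝ))
            (EuclideanSpace.single i 1) := by
      have := clm_eq_sum ((fderiv ℝ p (x, τ)).comp (ContinuousLinearMap.inl ℝ _ ℝ)) (F (x, τ))
      simpa [hL] using this
    rw [hLF, ← Finset.sum_add_distrib]
    congr 1
    funext i
    rw [hre i, fderiv_fun_mul hspd (hFid i)]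
    have hfp : fderiv ℝ (fun z => p (z, τ)) x
        = (fderiv ℝ p (x, τ)).comp (ContinuousLinearMap.inl ℝ _ ℝ) := (hsp x).fderiv
    simp [hfp, smul_eq_mul]
    try ring
  -- spatial derivative term
  have hLF0 : L (F (x, τ), 0) = L ((F (x, τ), 0) : EuclideanSpace ℝ (Fin d) × ℝ) := rfl
  have hkey : L (-F (x, τ), 1) = p (x, τ) * sdiv (fun y => F (y, τ)) x := by
    have : ((-F (x, τ), 1) : EuclideanSpace ℝ (Fin d) × ℝ)
        = (0, 1) - (F (x, τ), 0) := by
      simp [Prod.ext_iff]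
    rw [this, map_sub, hL01, hdiv]
    ring
  rw [hkey] at h2
  have hne : p (x, τ) ≠ 0 := (hpos x τ).ne'
  have := h2.log hne
  simpa [← hx, mul_div_assoc, mul_comm, mul_div_cancel_left₀ _ hne] using this
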